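/- arXiv:2406.13595 — 7 statements merged into one kernel-verified Lean document; each statement's English description precedes it below -/
import Mathlib

section
/- If P is a continuous L-ordered set, then for all x, y ∈ P, ⇓y(x) = ⋁_{z ∈ P} ⇓y(z) ∧ ⇓z(x) (the interpolation property of the fuzzy way-below relation). -/
open scoped Classical

namespace FuzzyPaper

variable {L : Type*} [Order.Frame L]

/-- The inclusion L-order on L-subsets: sub(A,B) = ⨅ x, A x ⇨ B x. -/
def subF {X : Type*} (A B : X → L) : L := ⨅ x, A x ⇨ B x

/-- `e` is an L-order: reflexivity, transitivity, antisymmetry. -/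
def IsLOrder {P : Type*} (e : P → P → L) : Prop :=
  (∀ x, e x x = ⊤) ∧ (∀ x y z, e x y ⊓ e y z ≤ e x z) ∧
  (∀ x y, e x y ⊓ e y x = ⊤ → x = y)

/-- `D` is a directed L-subset of `(P, e)`. -/
def IsDirectedL {P : Type*} (e : P → P → L) (D : P → L) : Prop :=
  (⨆ x, D x) = ⊤ ∧ ∀ x y, D x ⊓ D y ≤ ⨆ z, D z ⊓ e x z ⊓ e y z

/-- `x` is a supremum of the L-subset `A`: e(x,y) = sub(A, ↓y) for all y. -/
def IsSupOf {P : Type*} (e : P → P → L) (A : P → L) (x : P) : Prop :=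
  ∀ y, e x y = ⨅ z, A z ⇨ e z y

/-- The fuzzy way-below L-subset ⇓x :
⇓x(y) = ⨅_{D directed with a supremum s} (e(x,s) ⇨ ⨆ d, D d ⊓ e(y,d)). -/
def dwb {P : Type*} (e : P → P → L) (x : P) : P → L := fun y =>
  ⨅ Ds : {Ds : (P → L) × P // IsDirectedL e Ds.1 ∧ IsSupOf e Ds.1 Ds.2},
    e x Ds.1.2 ⇨ ⨆ d, Ds.1.1 d ⊓ e y d

/-- A continuous L-ordered set: ⇓x is directed with supremum x, for each x. -/
def IsContinuousLOrder {P : Type*} (e : P → P → L) : Prop :=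
  IsLOrder e ∧ ∀ x, IsDirectedL e (dwb e x) ∧ IsSupOf e (dwb e x) x

/-- An L-dcpo: every directed L-subset has a supremum. -/
def IsLDcpo {P : Type*} (e : P → P → L) : Prop :=
  IsLOrder e ∧ ∀ D, IsDirectedL e D → ∃ x, IsSupOf e D x

/-- A continuous L-dcpo. -/
def IsContinuousLDcpo {P : Type*} (e : P → P → L) : Prop :=
  IsLDcpo e ∧ ∀ x, IsDirectedL e (dwb e x) ∧ IsSupOf e (dwb e x) x

/-- Scott open L-subsets: upper sets inaccessible by directed suprema. -/
def IsScottOpen {P : Type*} (e : P → P → L) (A : P → L) : Prop :=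
  (∀ x y, A x ⊓ e x y ≤ A y) ∧
  ∀ D s, IsDirectedL e D → IsSupOf e D s → A s = ⨆ x, A x ⊓ D x

/-- The Scott L-topology. -/
def scottOpens {P : Type*} (e : P → P → L) : Set (P → L) := {A | IsScottOpen e A}

/-- `𝒪` is a (stratified) L-topology on X. -/
def IsLTop {X : Type*} (𝒪 : Set (X → L)) : Prop :=
  (∀ A ∈ 𝒪, ∀ B ∈ 𝒪, A ⊓ B ∈ 𝒪) ∧ (∀ S ⊆ 𝒪, sSup S ∈ 𝒪) ∧
  (∀ a : L, (fun _ => a) ∈ 𝒪)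

/-- T₀ separation. -/
def IsT0 {X : Type*} (𝒪 : Set (X → L)) : Prop :=
  ∀ x y : X, (∀ A ∈ 𝒪, A x = A y) → x = y

/-- The specialization L-order of an L-topological space. -/
def specE {X : Type*} (𝒪 : Set (X → L)) : X → X → L := fun x y =>
  ⨅ A : 𝒪, (A : X → L) x ⇨ (A : X → L) y

/-- A point of 𝒪(X): preserves binary meets, arbitrary joins and constants. -/
def IsPoint {X : Type*} (𝒪 : Set (X → L)) (p : 𝒪 → L) : Prop :=
  (∀ A B C : 𝒪, (C : X → L) = (A : X → L) ⊓ (B : X → L) → p C = p A ⊓ p B) ∧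
  (∀ (S : Set 𝒪) (C : 𝒪), (C : X → L) = sSup (Subtype.val '' S) →
    p C = ⨆ A ∈ S, p A) ∧
  (∀ (a : L) (C : 𝒪), (C : X → L) = (fun _ => a) → p C = a)

/-- The inclusion L-order on maps 𝒪 → L (in particular on points). -/
def subPt {X : Type*} (𝒪 : Set (X → L)) (p q : 𝒪 → L) : L := ⨅ A, p A ⇨ q A

/-- η : x ↦ [x], where [x](A) = A(x). -/
def etaPt {X : Type*} (𝒪 : Set (X → L)) (x : X) : 𝒪 → L := fun A => (A : X → L) x

/-- L-sobriety: η is a bijection onto the set of points. -/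
def IsSober {X : Type*} (𝒪 : Set (X → L)) : Prop :=
  (∀ x y : X, etaPt 𝒪 x = etaPt 𝒪 y → x = y) ∧
  (∀ p : 𝒪 → L, IsPoint 𝒪 p → ∃ x, p = etaPt 𝒪 x)

/-- Super-compact L-subsets. -/
def IsSuperCompact {X : Type*} (𝒪 : Set (X → L)) (A : X → L) : Prop :=
  (⨆ x, A x) = ⊤ ∧ ∀ S ⊆ 𝒪, subF A (sSup S) = ⨆ V ∈ S, subF A V

/-- Interior operator. -/
def interiorF {X : Type*} (𝒪 : Set (X → L)) (A : X → L) : X → L :=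
  sSup {B ∈ 𝒪 | B ≤ A}

/-- Locally super-compact L-topological spaces. -/
def IsLocallySC {X : Type*} (𝒪 : Set (X → L)) : Prop :=
  ∀ A ∈ 𝒪, A = fun x => ⨆ B ∈ {B | IsSuperCompact 𝒪 B}, subF B A ⊓ interiorF 𝒪 B x

/-- `ℬ` is a base of the L-topology `𝒪`. -/
def IsBase {X : Type*} (𝒪 : Set (X → L)) (ℬ : Set (X → L)) : Prop :=
  ℬ ⊆ 𝒪 ∧ ∀ A ∈ 𝒪, A = fun x => ⨆ B ∈ ℬ, subF B A ⊓ B x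

/-- Strong locally super-compact: a base of super-compact open sets. -/
def IsStrongLocallySC {X : Type*} (𝒪 : Set (X → L)) : Prop :=
  ∃ ℬ, IsBase 𝒪 ℬ ∧ ∀ B ∈ ℬ, IsSuperCompact 𝒪 B

/-- Continuity of maps of L-topological spaces. -/
def LCont {X Y : Type*} (𝒪X : Set (X → L)) (𝒪Y : Set (Y → L)) (f : X → Y) : Prop :=
  ∀ B ∈ 𝒪Y, (B ∘ f) ∈ 𝒪X

/-- k(x)(y) = e(y,x) if y is compact (⇓y(y) = ⊤), and ⊥ otherwise. -/
noncomputable def kfun {P : Type*} (e : P → P → L) (x : P) : P → L := fun y =>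
  if dwb e y y = ⊤ then e y x else ⊥

/-- Algebraic L-dcpo. -/
def IsAlgebraicLDcpo {P : Type*} (e : P → P → L) : Prop :=
  IsLDcpo e ∧ ∀ x, IsDirectedL e (kfun e x) ∧ IsSupOf e (kfun e x) x

/-- Quasihomeomorphism: f^← : 𝒪Y → 𝒪X is a bijection. -/
def IsQuasiHomeo {X Y : Type*} (𝒪X : Set (X → L)) (𝒪Y : Set (Y → L)) (f : X → Y) : Prop :=
  LCont 𝒪X 𝒪Y f ∧ (∀ A ∈ 𝒪X, ∃ B ∈ 𝒪Y, B ∘ f = A) ∧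
  (∀ B₁ ∈ 𝒪Y, ∀ B₂ ∈ 𝒪Y, B₁ ∘ f = B₂ ∘ f → B₁ = B₂)

/-- Subspace embedding of L-topological spaces. -/
def IsEmbeddingL {X Y : Type*} (𝒪X : Set (X → L)) (𝒪Y : Set (Y → L)) (f : X → Y) : Prop :=
  Function.Injective f ∧ 𝒪X = {A | ∃ B ∈ 𝒪Y, B ∘ f = A}

/-- Strict embedding: a quasihomeomorphism which is a subspace embedding. -/
def IsStrictEmbedding {X Y : Type*} (𝒪X : Set (X → L)) (𝒪Y : Set (Y → L)) (f : X → Y) : Prop :=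
  IsEmbeddingL 𝒪X 𝒪Y f ∧ IsQuasiHomeo 𝒪X 𝒪Y f

/-- L-sobrification: universal L-sober space over X. -/
def IsSobrification {X Y : Type*} (𝒪X : Set (X → L)) (𝒪Y : Set (Y → L)) (j : X → Y) : Prop :=
  IsLTop 𝒪Y ∧ IsSober 𝒪Y ∧ LCont 𝒪X 𝒪Y j ∧
  ∀ (Z : Type*) (𝒪Z : Set (Z → L)), IsLTop 𝒪Z → IsSober 𝒪Z →
    ∀ f : X → Z, LCont 𝒪X 𝒪Z f →
      ∃! g : Y → Z, LCont 𝒪Y 𝒪Z g ∧ f = g ∘ j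


section Aux

variable {P : Type*} {e : P → P → L}

lemma ledown_directed (hl : IsLOrder e) (y : P) :
    IsDirectedL e (fun d => e d y) := by
  constructor
  · exact top_unique (le_iSup_of_le y (le_of_eq (hl.1 y).symm))
  · intro a b
    refine le_iSup_of_le y ?_
    show e a y ⊓ e b y ≤ e y y ⊓ e a y ⊓ e b y
    rw [hl.1 y]
    simp [inf_assoc]

lemma ledown_sup (hl : IsLOrder e) (y : P) : IsSupOf e (fun d => e d y) y := by
  intro t
  apply le_antisymm
  · refine le_iInf fun z => le_himp_iff.mpr ?_
    rw [inf_comm]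
    exact hl.2.1 z y t
  · refine iInf_le_of_le y ?_
    show e y y ⇨ e y t ≤ e y t
    rw [hl.1 y, top_himp]

/-- way below implies below. -/
lemma dwb_le_e (hl : IsLOrder e) (x y : P) : dwb e y x ≤ e x y := by
  have h := iInf_le (fun Ds : {Ds : (P → L) × P //
      IsDirectedL e Ds.1 ∧ IsSupOf e Ds.1 Ds.2} =>
      e y Ds.1.2 ⇨ ⨆ d, Ds.1.1 d ⊓ e x d)
    ⟨((fun d => e d y), y), ledown_directed hl y, ledown_sup hl y⟩
  refine le_trans h ?_
  simp only [hl.1 y, top_himp]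
  refine iSup_le fun d => ?_
  rw [inf_comm]
  exact hl.2.1 x d y

/-- ⇓y is a lower set (in the second argument). -/
lemma dwb_down (hl : IsLOrder e) (x x' y : P) :
    e x' x ⊓ dwb e y x ≤ dwb e y x' := by
  refine le_iInf fun Ds => le_himp_iff.mpr ?_
  have h1 : dwb e y x ⊓ e y Ds.1.2 ≤ ⨆ d, Ds.1.1 d ⊓ e x d :=
    le_himp_iff.mp (iInf_le _ Ds)
  calc e x' x ⊓ dwb e y x ⊓ e y Ds.1.2
      ≤ e x' x ⊓ ⨆ d, Ds.1.1 d ⊓ e x d := by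
        rw [inf_assoc]; exact inf_le_inf_left _ h1
    _ = ⨆ d, e x' x ⊓ (Ds.1.1 d ⊓ e x d) := inf_iSup_eq _ _
    _ ≤ ⨆ d, Ds.1.1 d ⊓ e x' d := by
        refine iSup_mono fun d => ?_
        refine le_inf (inf_le_of_right_le inf_le_left) ?_
        calc e x' x ⊓ (Ds.1.1 d ⊓ e x d) ≤ e x' x ⊓ e x d :=
              inf_le_inf_left _ inf_le_right
          _ ≤ e x' d := hl.2.1 x' x d

/-- ⇓(-) x is monotone (in the first argument). -/
lemma dwb_up (hl : IsLOrder e) (x y y' : P) :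
    e y' y ⊓ dwb e y' x ≤ dwb e y x := by
  refine le_iInf fun Ds => le_himp_iff.mpr ?_
  have h1 : dwb e y' x ⊓ e y' Ds.1.2 ≤ ⨆ d, Ds.1.1 d ⊓ e x d :=
    le_himp_iff.mp (iInf_le _ Ds)
  calc e y' y ⊓ dwb e y' x ⊓ e y Ds.1.2
      ≤ dwb e y' x ⊓ e y' Ds.1.2 := by
        refine le_inf (inf_le_of_left_le inf_le_right) ?_
        calc e y' y ⊓ dwb e y' x ⊓ e y Ds.1.2
            ≤ e y' y ⊓ e y Ds.1.2 := inf_le_inf (inf_le_left) le_rfl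
          _ ≤ e y' Ds.1.2 := hl.2.1 y' y Ds.1.2
    _ ≤ _ := h1

end Aux

/-- Interpolation property of the fuzzy way-below relation. -/
theorem stmt6 {P : Type*} (e : P → P → L) (he : IsContinuousLOrder e) :
    ∀ x y : P, dwb e y x = ⨆ z, dwb e y z ⊓ dwb e z x := by
  obtain ⟨hl, hc⟩ := he
  intro x y
  set G : P → L := fun w => ⨆ z, dwb e z w ⊓ dwb e y z with hG
  have hGdir : IsDirectedL e G := by
    constructor
    · rw [iSup_comm]
      refine top_unique ?_
      have : (⊤ : L) = ⨆ z, dwb e y z := ((hc y).1.1).symm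
      rw [this]
      refine iSup_mono fun z => ?_
      calc dwb e y z = (⨆ w, dwb e z w) ⊓ dwb e y z := by
            rw [(hc z).1.1, top_inf_eq]
        _ = ⨆ w, dwb e z w ⊓ dwb e y z := iSup_inf_eq _ _
        _ ≤ _ := le_rfl
    · intro w w'
      have hL : G w ⊓ G w' =
          ⨆ z, ⨆ z', (dwb e z w ⊓ dwb e y z) ⊓ (dwb e z' w' ⊓ dwb e y z') := by
        simp only [hG, iSup_inf_eq]
        exact iSup_congr fun z => inf_iSup_eq _ _
      rw [hL]
      refine iSup_le fun z => iSup_le fun z' => ?_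
      have h1 : dwb e y z ⊓ dwb e y z' ≤ ⨆ u, dwb e y u ⊓ e z u ⊓ e z' u :=
        (hc y).1.2 z z'
      calc dwb e z w ⊓ dwb e y z ⊓ (dwb e z' w' ⊓ dwb e y z')
          = (dwb e z w ⊓ dwb e z' w') ⊓ (dwb e y z ⊓ dwb e y z') := by ac_rfl
        _ ≤ (dwb e z w ⊓ dwb e z' w') ⊓ ⨆ u, dwb e y u ⊓ e z u ⊓ e z' u :=
            inf_le_inf_left _ h1
        _ = ⨆ u, (dwb e z w ⊓ dwb e z' w') ⊓ (dwb e y u ⊓ e z u ⊓ e z' u) :=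
            inf_iSup_eq _ _
        _ ≤ ⨆ v, G v ⊓ e w v ⊓ e w' v := by
            refine iSup_le fun u => ?_
            calc (dwb e z w ⊓ dwb e z' w') ⊓ (dwb e y u ⊓ e z u ⊓ e z' u)
                = (e z u ⊓ dwb e z w) ⊓ ((e z' u ⊓ dwb e z' w') ⊓ dwb e y u) := by
                  ac_rfl
              _ ≤ dwb e u w ⊓ (dwb e u w' ⊓ dwb e y u) :=
                  inf_le_inf (dwb_up hl w u z) (inf_le_inf (dwb_up hl w' u z') le_rfl)
              _ = (dwb e u w ⊓ dwb e u w') ⊓ dwb e y u := by ac_rfl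
              _ ≤ (⨆ v, dwb e u v ⊓ e w v ⊓ e w' v) ⊓ dwb e y u :=
                  inf_le_inf ((hc u).1.2 w w') le_rfl
              _ = ⨆ v, (dwb e u v ⊓ e w v ⊓ e w' v) ⊓ dwb e y u := iSup_inf_eq _ _
              _ ≤ ⨆ v, G v ⊓ e w v ⊓ e w' v := by
                  refine iSup_mono fun v => ?_
                  have h2 : dwb e u v ⊓ dwb e y u ≤ G v := le_iSup
                    (fun z => dwb e z v ⊓ dwb e y z) u
                  calc dwb e u v ⊓ e w v ⊓ e w' v ⊓ dwb e y u
                      = (dwb e u v ⊓ dwb e y u) ⊓ e w v ⊓ e w' v := by ac_rfl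
                    _ ≤ G v ⊓ e w v ⊓ e w' v :=
                        inf_le_inf (inf_le_inf h2 le_rfl) le_rfl
  have hGsup : IsSupOf e G y := by
    intro t
    apply le_antisymm
    · refine le_iInf fun w => le_himp_iff.mpr ?_
      simp only [hG]
      rw [inf_comm, iSup_inf_eq]
      refine iSup_le fun z => ?_
      calc dwb e z w ⊓ dwb e y z ⊓ e y t
          ≤ e w z ⊓ (e z y ⊓ e y t) := by
            rw [inf_assoc]
            exact inf_le_inf (dwb_le_e hl w z) (inf_le_inf (dwb_le_e hl z y) le_rfl)
        _ ≤ e w z ⊓ e z t := inf_le_inf_left _ (hl.2.1 z y t)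
        _ ≤ e w t := hl.2.1 w z t
    · rw [(hc y).2 t]
      refine le_iInf fun z => le_himp_iff.mpr ?_
      rw [(hc z).2 t]
      refine le_iInf fun w => le_himp_iff.mpr ?_
      have h2 : dwb e y z ⊓ dwb e z w ≤ G w := by
        rw [inf_comm]
        exact le_iSup (fun z => dwb e z w ⊓ dwb e y z) z
      have h3 : (⨅ w, G w ⇨ e w t) ≤ G w ⇨ e w t := iInf_le _ w
      calc (⨅ w, G w ⇨ e w t) ⊓ dwb e y z ⊓ dwb e z w
          ≤ (G w ⇨ e w t) ⊓ G w := by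
            rw [inf_assoc]
            exact inf_le_inf h3 h2
        _ ≤ e w t := himp_inf_le
  apply le_antisymm
  · have h := iInf_le (fun Ds : {Ds : (P → L) × P //
        IsDirectedL e Ds.1 ∧ IsSupOf e Ds.1 Ds.2} =>
        e y Ds.1.2 ⇨ ⨆ d, Ds.1.1 d ⊓ e x d) ⟨(G, y), hGdir, hGsup⟩
    refine le_trans h ?_
    simp only [hl.1 y, top_himp]
    refine iSup_le fun w => ?_
    simp only [hG, iSup_inf_eq]
    refine iSup_le fun z => ?_
    refine le_iSup_of_le z ?_
    calc dwb e z w ⊓ dwb e y z ⊓ e x w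
        = dwb e y z ⊓ (e x w ⊓ dwb e z w) := by ac_rfl
      _ ≤ dwb e y z ⊓ dwb e z x := inf_le_inf_left _ (dwb_down hl w x z)
  · refine iSup_le fun z => le_iInf fun Ds => le_himp_iff.mpr ?_
    have h1 : dwb e y z ⊓ e y Ds.1.2 ≤ ⨆ d, Ds.1.1 d ⊓ e z d :=
      le_himp_iff.mp (iInf_le _ Ds)
    calc dwb e y z ⊓ dwb e z x ⊓ e y Ds.1.2
        = (dwb e y z ⊓ e y Ds.1.2) ⊓ dwb e z x := by ac_rfl
      _ ≤ (⨆ d, Ds.1.1 d ⊓ e z d) ⊓ dwb e z x := inf_le_inf h1 le_rfl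
      _ = ⨆ d, (Ds.1.1 d ⊓ e z d) ⊓ dwb e z x := iSup_inf_eq _ _
      _ ≤ ⨆ d, Ds.1.1 d ⊓ e x d := by
          refine iSup_mono fun d => ?_
          refine le_inf (inf_le_of_left_le inf_le_left) ?_
          calc Ds.1.1 d ⊓ e z d ⊓ dwb e z x
              ≤ e x z ⊓ e z d := by
                rw [inf_comm]
                exact inf_le_inf (dwb_le_e hl x z) inf_le_right
            _ ≤ e x d := hl.2.1 x z d

end FuzzyPaper
end

section
/- Let X be a stratified L-topological space. Then the set pt_L𝒪(X) of points of 𝒪(X), ordered by inclusion L-order sub, is an L-dcpo; moreover for every directed L-subset 𝔻 of pt_L𝒪(X), the supremum is given pointwise by (⊔𝔻)(A) = ⋁_{p} 𝔻(p) ∧ p(A). -/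
open scoped Classical

namespace FuzzyPaper

variable {L : Type*} [Order.Frame L]

section Helpers
variable {L : Type*} [Order.Frame L]

lemma iSup_himp_eq' {ι : Sort*} (f : ι → L) (c : L) : (⨆ i, f i) ⇨ c = ⨅ i, f i ⇨ c := by
  apply le_antisymm
  · exact le_iInf fun i => himp_le_himp_right (le_iSup f i)
  · rw [le_himp_iff, inf_iSup_eq]
    refine iSup_le fun i => ?_
    calc (⨅ j, f j ⇨ c) ⊓ f i ≤ (f i ⇨ c) ⊓ f i := inf_le_inf_right _ (iInf_le _ i)
      _ ≤ c := himp_inf_le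

lemma himp_iInf_eq' {ι : Sort*} (a : L) (f : ι → L) : a ⇨ ⨅ i, f i = ⨅ i, a ⇨ f i := by
  apply le_antisymm
  · exact le_iInf fun i => himp_le_himp_left (iInf_le f i)
  · rw [le_himp_iff]
    refine le_iInf fun i => ?_
    calc (⨅ j, a ⇨ f j) ⊓ a ≤ (a ⇨ f i) ⊓ a := inf_le_inf_right _ (iInf_le _ i)
      _ ≤ f i := himp_inf_le

lemma eq_top_of_iInf' {ι : Sort*} {f : ι → L} (h : (⨅ i, f i) = ⊤) (i : ι) : f i = ⊤ :=
  top_le_iff.mp (h ▸ iInf_le f i)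

end Helpers

/-- (pt_L𝒪(X), sub) is an L-dcpo with pointwise directed suprema. -/
theorem stmt9 {X : Type*} (𝒪 : Set (X → L)) (hT : IsLTop 𝒪) :
    IsLOrder (fun p q : {p : 𝒪 → L // IsPoint 𝒪 p} => subPt 𝒪 p.1 q.1) ∧
    ∀ 𝔻 : {p : 𝒪 → L // IsPoint 𝒪 p} → L,
      IsDirectedL (fun p q : {p : 𝒪 → L // IsPoint 𝒪 p} => subPt 𝒪 p.1 q.1) 𝔻 →
      ∃ h : IsPoint 𝒪 (fun A => ⨆ p : {p : 𝒪 → L // IsPoint 𝒪 p}, 𝔻 p ⊓ p.1 A),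
        IsSupOf (fun p q : {p : 𝒪 → L // IsPoint 𝒪 p} => subPt 𝒪 p.1 q.1) 𝔻
          ⟨fun A => ⨆ p : {p : 𝒪 → L // IsPoint 𝒪 p}, 𝔻 p ⊓ p.1 A, h⟩ := by
  classical
  set P := {p : 𝒪 → L // IsPoint 𝒪 p}
  set e : P → P → L := fun p q => subPt 𝒪 p.1 q.1 with he
  have hordre : IsLOrder e := by
    refine ⟨fun p => ?_, fun p q r => ?_, fun p q hpq => ?_⟩
    · simp [he, subPt]
    · refine le_iInf fun A => ?_
      have h1 : e p q ≤ p.1 A ⇨ q.1 A := iInf_le _ A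
      have h2 : e q r ≤ q.1 A ⇨ r.1 A := iInf_le _ A
      calc e p q ⊓ e q r ≤ (p.1 A ⇨ q.1 A) ⊓ (q.1 A ⇨ r.1 A) := inf_le_inf h1 h2
        _ ≤ p.1 A ⇨ r.1 A := by
            rw [le_himp_iff]
            calc (p.1 A ⇨ q.1 A) ⊓ (q.1 A ⇨ r.1 A) ⊓ p.1 A
                ≤ (q.1 A ⇨ r.1 A) ⊓ q.1 A :=
                  le_inf (inf_le_left.trans inf_le_right)
                    ((le_inf (inf_le_left.trans inf_le_left) inf_le_right).trans himp_inf_le)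
              _ ≤ r.1 A := himp_inf_le
    · have h1 : e p q = ⊤ := top_le_iff.mp (hpq ▸ inf_le_left)
      have h2 : e q p = ⊤ := top_le_iff.mp (hpq ▸ inf_le_right)
      refine Subtype.ext (funext fun A => le_antisymm ?_ ?_)
      · exact himp_eq_top_iff.mp (eq_top_of_iInf' (f := fun A => p.1 A ⇨ q.1 A) h1 A)
      · exact himp_eq_top_iff.mp (eq_top_of_iInf' (f := fun A => q.1 A ⇨ p.1 A) h2 A)
  refine ⟨hordre, fun 𝔻 h𝔻 => ?_⟩
  obtain ⟨htop, hdir⟩ := h𝔻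
  set s : 𝒪 → L := fun A => ⨆ p : P, 𝔻 p ⊓ p.1 A with hs
  have key : ∀ (p z : P) (A : 𝒪), e p z ⊓ p.1 A ≤ z.1 A := fun p z A => by
    have h : e p z ≤ p.1 A ⇨ z.1 A := iInf_le _ A
    exact (inf_le_inf_right _ h).trans himp_inf_le
  have hpoint : IsPoint 𝒪 s := by
    refine ⟨fun A B C hC => ?_, fun S C hC => ?_, fun a C hC => ?_⟩
    · have hCval : ∀ p : P, p.1 C = p.1 A ⊓ p.1 B := fun p => p.2.1 A B C hC
      rw [hs]
      apply le_antisymm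
      · refine iSup_le fun p => ?_
        rw [hCval p]
        exact le_inf (le_iSup_of_le p (inf_le_inf_left _ inf_le_left))
          (le_iSup_of_le p (inf_le_inf_left _ inf_le_right))
      · rw [iSup_inf_eq]
        refine iSup_le fun p => ?_
        rw [inf_iSup_eq]
        refine iSup_le fun q => ?_
        have hd := hdir p q
        calc 𝔻 p ⊓ p.1 A ⊓ (𝔻 q ⊓ q.1 B)
            ≤ (𝔻 p ⊓ 𝔻 q) ⊓ (p.1 A ⊓ q.1 B) := by
              refine le_inf (le_inf ?_ ?_) (inf_le_inf inf_le_right inf_le_right)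
              · exact inf_le_left.trans inf_le_left
              · exact inf_le_right.trans inf_le_left
          _ ≤ (⨆ z, 𝔻 z ⊓ e p z ⊓ e q z) ⊓ (p.1 A ⊓ q.1 B) := inf_le_inf_right _ hd
          _ = ⨆ z, 𝔻 z ⊓ e p z ⊓ e q z ⊓ (p.1 A ⊓ q.1 B) := by rw [iSup_inf_eq]
          _ ≤ ⨆ z, 𝔻 z ⊓ z.1 C := by
              refine iSup_le fun z => le_iSup_of_le z ?_
              rw [hCval z]
              refine le_inf ?_ (le_inf ?_ ?_)
              · exact inf_le_left.trans (inf_le_left.trans inf_le_left)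
              · refine le_trans ?_ (key p z A)
                refine le_inf ?_ ?_
                · exact inf_le_left.trans (inf_le_left.trans inf_le_right)
                · exact inf_le_right.trans inf_le_left
              · refine le_trans ?_ (key q z B)
                refine le_inf ?_ ?_
                · exact inf_le_left.trans inf_le_right
                · exact inf_le_right.trans inf_le_right
    · have hCval : ∀ p : P, p.1 C = ⨆ A ∈ S, p.1 A := fun p => p.2.2.1 S C hC
      rw [hs]
      simp only [hCval, inf_iSup_eq]
      rw [iSup_comm]
      exact iSup_congr fun A => iSup_comm
    · have hCval : ∀ p : P, p.1 C = a := fun p => p.2.2.2 a C hC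
      rw [hs]
      simp only [hCval]
      rw [← iSup_inf_eq, htop, top_inf_eq]
  refine ⟨hpoint, fun q => ?_⟩
  show (⨅ A, s A ⇨ q.1 A) = ⨅ p : P, 𝔻 p ⇨ subPt 𝒪 p.1 q.1
  have h1 : ∀ A, s A ⇨ q.1 A = ⨅ p : P, (𝔻 p ⊓ p.1 A) ⇨ q.1 A := fun A => by
    rw [hs]; exact iSup_himp_eq' _ _
  simp only [h1]
  rw [iInf_comm]
  refine iInf_congr fun p => ?_
  calc (⨅ A, (𝔻 p ⊓ p.1 A) ⇨ q.1 A)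
      = ⨅ A, 𝔻 p ⇨ (p.1 A ⇨ q.1 A) := iInf_congr fun A => (himp_himp _ _ _).symm
    _ = 𝔻 p ⇨ ⨅ A, p.1 A ⇨ q.1 A := (himp_iInf_eq' _ _).symm
    _ = 𝔻 p ⇨ subPt 𝒪 p.1 q.1 := rfl

end FuzzyPaper
end

section
/- Let P be an L-dcpo and x ∈ P. If there exists a directed L-subset D with D ≤ ⇓x (pointwise) and ⊔D = x, then ⇓x is directed and ⊔⇓x = x. -/
open scoped Classical

namespace FuzzyPaper

variable {L : Type*} [Order.Frame L]

/-- If some directed D ≤ ⇓x has supremum x, then ⇓x is directed with supremum x. -/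
theorem stmt12 {P : Type*} (e : P → P → L) (he : IsLDcpo e) (x : P) (D : P → L)
    (hD : IsDirectedL e D) (hle : D ≤ dwb e x) (hsup : IsSupOf e D x) :
    IsDirectedL e (dwb e x) ∧ IsSupOf e (dwb e x) x := by
  obtain ⟨⟨hrefl, htrans, _⟩, _⟩ := he
  -- D z ≤ e z x
  have hDsub : ∀ z, D z ≤ e z x := by
    intro z
    have h := hsup x
    rw [hrefl] at h
    have h2 : (⊤ : L) ≤ D z ⇨ e z x := h.le.trans (iInf_le _ z)
    simpa using le_himp_iff.mp h2
  -- dwb e x y ≤ ⨆ d, D d ⊓ e y d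
  have hwb : ∀ y, dwb e x y ≤ ⨆ d, D d ⊓ e y d := by
    intro y
    have h := iInf_le (fun Ds : {Ds : (P → L) × P // IsDirectedL e Ds.1 ∧ IsSupOf e Ds.1 Ds.2} =>
      e x Ds.1.2 ⇨ ⨆ d, Ds.1.1 d ⊓ e y d) ⟨(D, x), hD, hsup⟩
    simpa [dwb, hrefl] using h
  -- dwb e x y ≤ e y x
  have hwbx : ∀ y, dwb e x y ≤ e y x := by
    intro y
    refine (hwb y).trans (iSup_le fun d => ?_)
    have : D d ⊓ e y d ≤ e y d ⊓ e d x :=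
      le_inf inf_le_right (inf_le_left.trans (hDsub d))
    exact this.trans (htrans y d x)
  constructor
  · constructor
    · refine le_antisymm le_top ?_
      rw [← hD.1]
      exact iSup_mono fun y => hle y
    · intro a b
      have h1 : dwb e x a ⊓ dwb e x b ≤ (⨆ d, D d ⊓ e a d) ⊓ (⨆ d', D d' ⊓ e b d') :=
        inf_le_inf (hwb a) (hwb b)
      refine h1.trans ?_
      rw [iSup_inf_eq]
      refine iSup_le fun d => ?_
      rw [inf_iSup_eq]
      refine iSup_le fun d' => ?_
      have h2 : (D d ⊓ e a d) ⊓ (D d' ⊓ e b d') ≤ (e a d ⊓ e b d') ⊓ (D d ⊓ D d') := by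
        refine le_inf (le_inf ?_ ?_) (le_inf ?_ ?_)
        · exact inf_le_left.trans inf_le_right
        · exact inf_le_right.trans inf_le_right
        · exact inf_le_left.trans inf_le_left
        · exact inf_le_right.trans inf_le_left
      refine h2.trans ?_
      have h3 : (e a d ⊓ e b d') ⊓ (D d ⊓ D d') ≤
          (e a d ⊓ e b d') ⊓ ⨆ z, D z ⊓ e d z ⊓ e d' z :=
        inf_le_inf_left _ (hD.2 d d')
      refine h3.trans ?_
      rw [inf_iSup_eq]
      refine iSup_le fun z => le_iSup_of_le z ?_
      have hDz : (e a d ⊓ e b d') ⊓ (D z ⊓ e d z ⊓ e d' z) ≤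
          dwb e x z ⊓ e a z ⊓ e b z := by
        refine le_inf (le_inf ?_ ?_) ?_
        · exact (inf_le_right.trans (inf_le_left.trans inf_le_left)).trans (hle z)
        · have : (e a d ⊓ e b d') ⊓ (D z ⊓ e d z ⊓ e d' z) ≤ e a d ⊓ e d z :=
            le_inf (inf_le_left.trans inf_le_left)
              (inf_le_right.trans (inf_le_left.trans inf_le_right))
          exact this.trans (htrans a d z)
        · have : (e a d ⊓ e b d') ⊓ (D z ⊓ e d z ⊓ e d' z) ≤ e b d' ⊓ e d' z :=
            le_inf (inf_le_left.trans inf_le_right)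
              (inf_le_right.trans inf_le_right)
          exact this.trans (htrans b d' z)
      exact hDz
  · intro y
    refine le_antisymm ?_ ?_
    · refine le_iInf fun z => le_himp_iff.mpr ?_
      have : e x y ⊓ dwb e x z ≤ e z x ⊓ e x y :=
        le_inf (inf_le_right.trans (hwbx z)) inf_le_left
      exact this.trans (htrans z x y)
    · have h1 : (⨅ z, dwb e x z ⇨ e z y) ≤ ⨅ z, D z ⇨ e z y :=
        iInf_mono fun z => himp_le_himp (hle z) le_rfl
      rw [← hsup y] at h1
      exact h1

end FuzzyPaper
end

section
/- Let X be a locally super-compact stratified L-topological space. Then for every x ∈ X, in the L-dcpo pt_L𝒪(X) of points, the L-subset ⇓[x] is directed and ⊔⇓[x] = [x], where [x](A) = A(x). -/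
open scoped Classical

namespace FuzzyPaper

variable {L : Type*} [Order.Frame L]

section AuxStmt13

variable {L : Type*} [Order.Frame L]

private lemma iSup_himp' {ι : Sort*} (f : ι → L) (b : L) :
    (⨆ i, f i) ⇨ b = ⨅ i, f i ⇨ b := by
  apply le_antisymm
  · exact le_iInf fun i => himp_le_himp_right (le_iSup f i)
  · rw [le_himp_iff, inf_iSup_eq]
    exact iSup_le fun i =>
      le_trans (inf_le_inf_right _ (iInf_le _ i)) himp_inf_le

private lemma himp_trans' (a b c : L) : (a ⇨ b) ⊓ (b ⇨ c) ≤ a ⇨ c := by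
  rw [le_himp_iff, inf_right_comm]
  refine le_trans (inf_le_inf_right _ himp_inf_le) ?_
  rw [inf_comm]
  exact himp_inf_le

variable {X : Type*} {𝒪 : Set (X → L)}

private lemma subF_refl (A : X → L) : subF A A = ⊤ := by simp [subF]

private lemma subF_inf_apply (A B : X → L) (y : X) : subF A B ⊓ A y ≤ B y :=
  le_trans (inf_le_inf_right _ (iInf_le _ y)) himp_inf_le

private lemma subF_trans (A B C : X → L) : subF A B ⊓ subF B C ≤ subF A C :=
  le_iInf fun y => le_trans (inf_le_inf (iInf_le _ y) (iInf_le _ y)) (himp_trans' _ _ _)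

private lemma subF_mono_right {A A' : X → L} (B : X → L) (h : A ≤ A') :
    subF B A ≤ subF B A' :=
  le_iInf fun y => le_trans (iInf_le _ y) (himp_le_himp_left (h y))

private lemma subF_anti_left {B B' : X → L} (A : X → L) (h : B' ≤ B) :
    subF B A ≤ subF B' A :=
  le_iInf fun y => le_trans (iInf_le _ y) (himp_le_himp_right (h y))

private lemma subPt_refl' (p : 𝒪 → L) : subPt 𝒪 p p = ⊤ := by simp [subPt]

private lemma subPt_inf_apply (p q : 𝒪 → L) (A : 𝒪) : subPt 𝒪 p q ⊓ p A ≤ q A :=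
  le_trans (inf_le_inf_right _ (iInf_le _ A)) himp_inf_le

private lemma subPt_trans' (p q r : 𝒪 → L) :
    subPt 𝒪 p q ⊓ subPt 𝒪 q r ≤ subPt 𝒪 p r :=
  le_iInf fun A => le_trans (inf_le_inf (iInf_le _ A) (iInf_le _ A)) (himp_trans' _ _ _)

/-- Points are monotone (crisply). -/
private lemma point_mono {q : 𝒪 → L} (hq : IsPoint 𝒪 q) {A B : 𝒪}
    (h : (A : X → L) ≤ (B : X → L)) : q A ≤ q B := by
  have hB : (B : X → L) = sSup (Subtype.val '' ({A, B} : Set 𝒪)) := by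
    rw [Set.image_pair, sSup_pair, sup_eq_right.mpr h]
  have := hq.2.1 {A, B} B hB
  rw [this]
  exact le_trans (le_iSup_of_le A (by simp)) le_rfl

/-- Points are monotone in the fuzzy sense. -/
private lemma point_mono_fuzzy (hT : IsLTop 𝒪) {q : 𝒪 → L} (hq : IsPoint 𝒪 q)
    (A B : 𝒪) : q A ⊓ subF (A : X → L) (B : X → L) ≤ q B := by
  set c := subF (A : X → L) (B : X → L) with hc
  have hconst : (fun _ : X => c) ∈ 𝒪 := hT.2.2 c
  have hW : (A : X → L) ⊓ (fun _ => c) ∈ 𝒪 := hT.1 _ A.2 _ hconst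
  have h1 : q ⟨_, hW⟩ = q A ⊓ q ⟨_, hconst⟩ := hq.1 A ⟨_, hconst⟩ ⟨_, hW⟩ rfl
  have h2 : q ⟨_, hconst⟩ = c := hq.2.2 c ⟨_, hconst⟩ rfl
  have h3 : ((⟨_, hW⟩ : 𝒪) : X → L) ≤ (B : X → L) := by
    intro y
    calc (A : X → L) y ⊓ c ≤ (A : X → L) y ⊓ ((A : X → L) y ⇨ (B : X → L) y) :=
          inf_le_inf_left _ (iInf_le _ y)
      _ ≤ (B : X → L) y := by rw [inf_comm]; exact himp_inf_le
  calc q A ⊓ c = q ⟨_, hW⟩ := by rw [h1, h2]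
    _ ≤ q B := point_mono hq h3

private lemma eta_isPoint (x : X) : IsPoint 𝒪 (etaPt 𝒪 x) := by
  refine ⟨fun A B C h => ?_, fun S C h => ?_, fun a C h => ?_⟩
  · simp only [etaPt, h, Pi.inf_apply]
  · simp only [etaPt, h, sSup_apply]
    apply le_antisymm
    · refine iSup_le fun f => ?_
      obtain ⟨g, hg⟩ := f
      obtain ⟨A, hA, rfl⟩ := hg
      exact le_iSup_of_le A (le_iSup_of_le hA le_rfl)
    · refine iSup_le fun A => iSup_le fun hA => ?_
      exact le_iSup (fun f : Subtype.val '' S => (f : X → L) x) ⟨A.1, ⟨A, hA, rfl⟩⟩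
  · simp only [etaPt, h]

private lemma pB_isPoint {B : X → L} (hB : IsSuperCompact 𝒪 B) :
    IsPoint 𝒪 (fun A : 𝒪 => subF B (A : X → L)) := by
  refine ⟨fun A A' C h => ?_, fun S C h => ?_, fun a C h => ?_⟩
  · simp only [h, subF, Pi.inf_apply, himp_inf_distrib]
    exact iInf_inf_eq
  · have hsub : Subtype.val '' S ⊆ 𝒪 := by rintro f ⟨A, _, rfl⟩; exact A.2
    show subF B (C : X → L) = ⨆ A ∈ S, subF B (A : X → L)
    rw [h, hB.2 _ hsub]
    apply le_antisymm
    · refine iSup_le fun f => iSup_le fun hf => ?_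
      obtain ⟨A, hA, rfl⟩ := hf
      exact le_iSup_of_le A (le_iSup_of_le hA le_rfl)
    · refine iSup_le fun A => iSup_le fun hA => ?_
      exact le_iSup_of_le A.1 (le_iSup_of_le ⟨A, hA, rfl⟩ le_rfl)
  · simp only [h, subF]
    rw [← iSup_himp', hB.1, top_himp]


/-- The pointwise directed supremum of points is a point. -/
private lemma pinf_isPoint {D : {p : 𝒪 → L // IsPoint 𝒪 p} → L}
    (hD : IsDirectedL (fun p q : {p : 𝒪 → L // IsPoint 𝒪 p} => subPt 𝒪 p.1 q.1) D) :
    IsPoint 𝒪 (fun A => ⨆ z : {p : 𝒪 → L // IsPoint 𝒪 p}, D z ⊓ z.1 A) := by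
  refine ⟨fun A B C h => ?_, fun S C h => ?_, fun a C h => ?_⟩
  · apply le_antisymm
    · refine iSup_le fun z => ?_
      rw [z.2.1 A B C h]
      exact le_inf (le_iSup_of_le z (inf_le_inf_left _ inf_le_left))
        (le_iSup_of_le z (inf_le_inf_left _ inf_le_right))
    · rw [iSup_inf_eq]
      refine iSup_le fun z => ?_
      rw [inf_iSup_eq]
      refine iSup_le fun w => ?_
      calc D z ⊓ z.1 A ⊓ (D w ⊓ w.1 B)
          = (D z ⊓ D w) ⊓ (z.1 A ⊓ w.1 B) := by ac_rfl
        _ ≤ (⨆ u, D u ⊓ subPt 𝒪 z.1 u.1 ⊓ subPt 𝒪 w.1 u.1) ⊓ (z.1 A ⊓ w.1 B) :=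
            inf_le_inf_right _ (hD.2 z w)
        _ = ⨆ u, D u ⊓ subPt 𝒪 z.1 u.1 ⊓ subPt 𝒪 w.1 u.1 ⊓ (z.1 A ⊓ w.1 B) := by
            rw [iSup_inf_eq]
        _ ≤ ⨆ u : {p : 𝒪 → L // IsPoint 𝒪 p}, D u ⊓ u.1 C := by
            refine iSup_le fun u => le_iSup_of_le u ?_
            rw [u.2.1 A B C h]
            calc D u ⊓ subPt 𝒪 z.1 u.1 ⊓ subPt 𝒪 w.1 u.1 ⊓ (z.1 A ⊓ w.1 B)
                = D u ⊓ ((subPt 𝒪 z.1 u.1 ⊓ z.1 A) ⊓ (subPt 𝒪 w.1 u.1 ⊓ w.1 B)) := by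
                  ac_rfl
              _ ≤ D u ⊓ (u.1 A ⊓ u.1 B) :=
                  inf_le_inf_left _ (inf_le_inf (subPt_inf_apply _ _ _) (subPt_inf_apply _ _ _))
  · apply le_antisymm
    · refine iSup_le fun z => ?_
      rw [z.2.2.1 S C h, inf_iSup_eq]
      refine iSup_le fun A => ?_
      rw [inf_iSup_eq]
      refine iSup_le fun hA => ?_
      exact le_iSup_of_le A (le_iSup_of_le hA (le_iSup_of_le z le_rfl))
    · refine iSup_le fun A => iSup_le fun hA => iSup_le fun z => ?_
      refine le_iSup_of_le z ?_
      rw [z.2.2.1 S C h]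
      exact inf_le_inf_left _ (le_iSup_of_le A (le_iSup_of_le hA le_rfl))
  · have : ∀ z : {p : 𝒪 → L // IsPoint 𝒪 p}, z.1 C = a := fun z => z.2.2.2 a C h
    calc (⨆ z : {p : 𝒪 → L // IsPoint 𝒪 p}, D z ⊓ z.1 C)
        = ⨆ z : {p : 𝒪 → L // IsPoint 𝒪 p}, D z ⊓ a := by
          refine iSup_congr fun z => by rw [this z]
      _ = (⨆ z, D z) ⊓ a := (iSup_inf_eq _ _).symm
      _ = a := by rw [hD.1, top_inf_eq]

/-- Suprema of directed families of points are computed pointwise. -/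
private lemma supOf_apply {D : {p : 𝒪 → L // IsPoint 𝒪 p} → L}
    {s : {p : 𝒪 → L // IsPoint 𝒪 p}}
    (hD : IsDirectedL (fun p q : {p : 𝒪 → L // IsPoint 𝒪 p} => subPt 𝒪 p.1 q.1) D)
    (hs : IsSupOf (fun p q : {p : 𝒪 → L // IsPoint 𝒪 p} => subPt 𝒪 p.1 q.1) D s)
    (A : 𝒪) : s.1 A = ⨆ z, D z ⊓ z.1 A := by
  set pinf : {p : 𝒪 → L // IsPoint 𝒪 p} := ⟨fun A => ⨆ z, D z ⊓ z.1 A, pinf_isPoint hD⟩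
    with hpinf
  have hub : ∀ z, D z ≤ subPt 𝒪 z.1 pinf.1 := fun z =>
    le_iInf fun A => le_himp_iff.mpr (le_iSup_of_le z le_rfl)
  have h1 : subPt 𝒪 s.1 pinf.1 = ⊤ := by
    have h0 := hs pinf
    simp only at h0
    rw [h0, iInf_eq_top]
    exact fun z => himp_eq_top_iff.mpr (hub z)
  have h2 : ∀ z, D z ≤ subPt 𝒪 z.1 s.1 := by
    have h3 := hs s
    simp only at h3
    rw [subPt_refl'] at h3
    exact fun z => himp_eq_top_iff.mp (iInf_eq_top.mp h3.symm z)
  apply le_antisymm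
  · have := iInf_eq_top.mp h1 A
    exact himp_eq_top_iff.mp this
  · exact iSup_le fun z =>
      le_trans (inf_le_inf_right _ (h2 z)) (subPt_inf_apply _ _ _)

/-- ⇓x(y) ≤ e(y,x) in any reflexive transitive L-ordered set. -/
private lemma dwb_le_e_s13 {P : Type*} (e : P → P → L) (hrefl : ∀ p, e p p = ⊤)
    (htrans : ∀ p q r, e p q ⊓ e q r ≤ e p r) (x y : P) : dwb e x y ≤ e y x := by
  have hdir : IsDirectedL e (fun z => e z x) := by
    constructor
    · exact le_antisymm le_top (le_trans (hrefl x).symm.le (le_iSup (fun z => e z x) x))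
    · intro p q
      refine le_iSup_of_le x ?_
      show e p x ⊓ e q x ≤ e x x ⊓ e p x ⊓ e q x
      rw [hrefl x, top_inf_eq]
  have hsup : IsSupOf e (fun z => e z x) x := by
    intro y
    apply le_antisymm
    · refine le_iInf fun z => le_himp_iff.mpr ?_
      rw [inf_comm]
      exact htrans z x y
    · refine le_trans (iInf_le _ x) ?_
      show e x x ⇨ e x y ≤ e x y
      rw [hrefl x, top_himp]
  refine le_trans (iInf_le _ ⟨⟨fun z => e z x, x⟩, hdir, hsup⟩) ?_
  rw [hrefl x, top_himp]
  refine iSup_le fun d => ?_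
  rw [inf_comm]
  exact htrans y d x

private lemma interiorF_mem (hT : IsLTop 𝒪) (B : X → L) : interiorF 𝒪 B ∈ 𝒪 :=
  hT.2.1 _ fun _ h => h.1

private lemma interiorF_le (B : X → L) : interiorF 𝒪 B ≤ B := sSup_le fun _ h => h.2


variable (𝒪) in
/-- The point associated with a super-compact L-subset. -/
private def PB (B : {B : X → L // IsSuperCompact 𝒪 B}) : {p : 𝒪 → L // IsPoint 𝒪 p} :=
  ⟨fun A => subF B.1 (A : X → L), pB_isPoint B.2⟩

variable (𝒪) in
/-- The family of super-compact approximations to the point [x]. -/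
private def Dx (x : X) : {p : 𝒪 → L // IsPoint 𝒪 p} → L := fun d =>
  ⨆ B : {B : X → L // IsSuperCompact 𝒪 B}, ⨆ _ : PB 𝒪 B = d, interiorF 𝒪 B.1 x

private lemma Dx_iSup (x : X) (f : {p : 𝒪 → L // IsPoint 𝒪 p} → L) :
    (⨆ d, Dx 𝒪 x d ⊓ f d) =
      ⨆ B : {B : X → L // IsSuperCompact 𝒪 B}, interiorF 𝒪 B.1 x ⊓ f (PB 𝒪 B) := by
  apply le_antisymm
  · refine iSup_le fun d => ?_
    show (⨆ B, ⨆ _ : PB 𝒪 B = d, interiorF 𝒪 B.1 x) ⊓ f d ≤ _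
    rw [iSup_inf_eq]
    refine iSup_le fun B => ?_
    rw [iSup_inf_eq]
    refine iSup_le fun hBd => ?_
    subst hBd
    exact le_iSup_of_le B le_rfl
  · refine iSup_le fun B => le_iSup_of_le (PB 𝒪 B) (inf_le_inf_right _ ?_)
    exact le_iSup_of_le B (le_iSup_of_le rfl le_rfl)

private lemma Dx_iInf (x : X) (f : {p : 𝒪 → L // IsPoint 𝒪 p} → L) :
    (⨅ d, Dx 𝒪 x d ⇨ f d) =
      ⨅ B : {B : X → L // IsSuperCompact 𝒪 B}, interiorF 𝒪 B.1 x ⇨ f (PB 𝒪 B) := by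
  apply le_antisymm
  · refine le_iInf fun B => ?_
    refine le_trans (iInf_le _ (PB 𝒪 B)) (himp_le_himp_right ?_)
    exact le_iSup_of_le B (le_iSup_of_le rfl le_rfl)
  · refine le_iInf fun d => ?_
    show _ ≤ (⨆ B, ⨆ _ : PB 𝒪 B = d, interiorF 𝒪 B.1 x) ⇨ f d
    rw [iSup_himp']
    refine le_iInf fun B => ?_
    rw [iSup_himp']
    refine le_iInf fun hBd => ?_
    subst hBd
    exact iInf_le _ B

private lemma lsc_apply (hl : IsLocallySC 𝒪) {A : X → L} (hA : A ∈ 𝒪) (x : X) :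
    A x = ⨆ B : {B : X → L // IsSuperCompact 𝒪 B},
      subF B.1 A ⊓ interiorF 𝒪 B.1 x := by
  conv_lhs => rw [hl A hA]
  apply le_antisymm
  · exact iSup_le fun B => iSup_le fun hB => le_iSup_of_le ⟨B, hB⟩ le_rfl
  · exact iSup_le fun B => le_iSup_of_le B.1 (le_iSup_of_le B.2 le_rfl)

private lemma int_top (hT : IsLTop 𝒪) (hl : IsLocallySC 𝒪) (x : X) :
    (⨆ B : {B : X → L // IsSuperCompact 𝒪 B}, interiorF 𝒪 B.1 x) = ⊤ := by
  refine le_antisymm le_top ?_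
  have h := lsc_apply hl (hT.2.2 (⊤ : L)) x
  simp only [subF, himp_top, iInf_top, top_inf_eq] at h
  exact h.le

private lemma subF_le_ePB (B B'' : {B : X → L // IsSuperCompact 𝒪 B}) :
    subF B''.1 B.1 ≤ subPt 𝒪 (PB 𝒪 B).1 (PB 𝒪 B'').1 :=
  le_iInf fun A => le_himp_iff.mpr (subF_trans B''.1 B.1 (A : X → L))

private lemma point_int_le (hT : IsLTop 𝒪) (d : {p : 𝒪 → L // IsPoint 𝒪 p})
    (B : {B : X → L // IsSuperCompact 𝒪 B}) :
    d.1 ⟨interiorF 𝒪 B.1, interiorF_mem hT B.1⟩ ≤ subPt 𝒪 (PB 𝒪 B).1 d.1 := by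
  refine le_iInf fun A => le_himp_iff.mpr ?_
  show d.1 ⟨interiorF 𝒪 B.1, _⟩ ⊓ subF B.1 (A : X → L) ≤ d.1 A
  refine le_trans (inf_le_inf_left _ (subF_anti_left _ (interiorF_le (𝒪 := 𝒪) B.1))) ?_
  exact point_mono_fuzzy hT d.2 _ A

private lemma core (hT : IsLTop 𝒪) (hl : IsLocallySC 𝒪) (x : X)
    (B B' : {B : X → L // IsSuperCompact 𝒪 B}) :
    interiorF 𝒪 B.1 x ⊓ interiorF 𝒪 B'.1 x ≤
      ⨆ B'' : {B : X → L // IsSuperCompact 𝒪 B},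
        interiorF 𝒪 B''.1 x ⊓ (subF B''.1 B.1 ⊓ subF B''.1 B'.1) := by
  have hU : interiorF 𝒪 B.1 ⊓ interiorF 𝒪 B'.1 ∈ 𝒪 :=
    hT.1 _ (interiorF_mem hT _) _ (interiorF_mem hT _)
  have h := lsc_apply hl hU x
  have hpt : interiorF 𝒪 B.1 x ⊓ interiorF 𝒪 B'.1 x
      = (interiorF 𝒪 B.1 ⊓ interiorF 𝒪 B'.1) x := rfl
  rw [hpt, h]
  refine iSup_le fun B'' => le_iSup_of_le B'' ?_
  rw [inf_comm]
  refine inf_le_inf_left _ (le_inf ?_ ?_)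
  · exact subF_mono_right _ (le_trans inf_le_left (interiorF_le (𝒪 := 𝒪) _))
  · exact subF_mono_right _ (le_trans inf_le_right (interiorF_le (𝒪 := 𝒪) _))

private lemma Dx_directed (hT : IsLTop 𝒪) (hl : IsLocallySC 𝒪) (x : X) :
    IsDirectedL (fun p q : {p : 𝒪 → L // IsPoint 𝒪 p} => subPt 𝒪 p.1 q.1) (Dx 𝒪 x) := by
  constructor
  · have h1 : (⨆ d, Dx 𝒪 x d ⊓ ⊤) = ⨆ B : {B : X → L // IsSuperCompact 𝒪 B}, interiorF 𝒪 B.1 x ⊓ ⊤ := Dx_iSup x (fun _ => ⊤)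
    simp only [inf_top_eq] at h1
    rw [h1, int_top hT hl x]
  · intro p q
    show (⨆ B, ⨆ _ : PB 𝒪 B = p, interiorF 𝒪 B.1 x) ⊓
        (⨆ B, ⨆ _ : PB 𝒪 B = q, interiorF 𝒪 B.1 x) ≤ _
    rw [iSup_inf_eq]
    refine iSup_le fun B => ?_
    rw [iSup_inf_eq]
    refine iSup_le fun hBp => ?_
    subst hBp
    rw [inf_iSup_eq]
    refine iSup_le fun B' => ?_
    rw [inf_iSup_eq]
    refine iSup_le fun hBq => ?_
    subst hBq
    refine le_trans (core hT hl x B B') ?_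
    refine iSup_le fun B'' => le_iSup_of_le (PB 𝒪 B'') ?_
    refine le_inf (le_inf ?_ ?_) ?_
    · exact le_trans inf_le_left (le_iSup_of_le B'' (le_iSup_of_le rfl le_rfl))
    · exact le_trans inf_le_right (le_trans inf_le_left (subF_le_ePB B B''))
    · exact le_trans inf_le_right (le_trans inf_le_right (subF_le_ePB B' B''))

private lemma Dx_supOf (hT : IsLTop 𝒪) (hl : IsLocallySC 𝒪) (x : X) :
    IsSupOf (fun p q : {p : 𝒪 → L // IsPoint 𝒪 p} => subPt 𝒪 p.1 q.1) (Dx 𝒪 x)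
      ⟨etaPt 𝒪 x, eta_isPoint x⟩ := by
  intro q
  show subPt 𝒪 (etaPt 𝒪 x) q.1 = ⨅ z, Dx 𝒪 x z ⇨ subPt 𝒪 z.1 q.1
  rw [Dx_iInf x (fun z => subPt 𝒪 z.1 q.1)]
  apply le_antisymm
  · refine le_iInf fun B => le_himp_iff.mpr ?_
    refine le_iInf fun A => le_himp_iff.mpr ?_
    show subPt 𝒪 (etaPt 𝒪 x) q.1 ⊓ interiorF 𝒪 B.1 x ⊓ subF B.1 (A : X → L) ≤ q.1 A
    set iB : 𝒪 := ⟨interiorF 𝒪 B.1, interiorF_mem hT B.1⟩ with hiB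
    have h1 : subPt 𝒪 (etaPt 𝒪 x) q.1 ⊓ interiorF 𝒪 B.1 x ≤ q.1 iB :=
      subPt_inf_apply (etaPt 𝒪 x) q.1 iB
    refine le_trans (inf_le_inf h1 (subF_anti_left _ (interiorF_le (𝒪 := 𝒪) B.1))) ?_
    exact point_mono_fuzzy hT q.2 iB A
  · refine le_iInf fun A => le_himp_iff.mpr ?_
    show _ ⊓ etaPt 𝒪 x A ≤ q.1 A
    have hAx : etaPt 𝒪 x A = ⨆ B : {B : X → L // IsSuperCompact 𝒪 B},
        subF B.1 (A : X → L) ⊓ interiorF 𝒪 B.1 x := lsc_apply hl A.2 x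
    rw [hAx, inf_iSup_eq]
    refine iSup_le fun B => ?_
    refine le_trans (inf_le_inf (iInf_le _ B) le_rfl) ?_
    have heq : (interiorF 𝒪 B.1 x ⇨ subPt 𝒪 (PB 𝒪 B).1 q.1) ⊓
        (subF B.1 (A : X → L) ⊓ interiorF 𝒪 B.1 x) =
        ((interiorF 𝒪 B.1 x ⇨ subPt 𝒪 (PB 𝒪 B).1 q.1) ⊓ interiorF 𝒪 B.1 x) ⊓
          subF B.1 (A : X → L) := by ac_rfl
    rw [heq]
    refine le_trans (inf_le_inf_right _ himp_inf_le) ?_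
    refine le_trans (inf_le_inf_right _ (iInf_le _ A)) ?_
    exact himp_inf_le


private lemma int_le_dwb (hT : IsLTop 𝒪) (x : X) (B : {B : X → L // IsSuperCompact 𝒪 B}) :
    interiorF 𝒪 B.1 x ≤
      dwb (fun p q : {p : 𝒪 → L // IsPoint 𝒪 p} => subPt 𝒪 p.1 q.1)
        ⟨etaPt 𝒪 x, eta_isPoint x⟩ (PB 𝒪 B) := by
  refine le_iInf fun Ds => ?_
  obtain ⟨⟨D, s⟩, hdir, hsup⟩ := Ds
  refine le_himp_iff.mpr ?_
  show interiorF 𝒪 B.1 x ⊓ subPt 𝒪 (etaPt 𝒪 x) s.1 ≤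
    ⨆ d, D d ⊓ subPt 𝒪 (PB 𝒪 B).1 d.1
  set iB : 𝒪 := ⟨interiorF 𝒪 B.1, interiorF_mem hT B.1⟩ with hiB
  have h1 : interiorF 𝒪 B.1 x ⊓ subPt 𝒪 (etaPt 𝒪 x) s.1 ≤ s.1 iB := by
    rw [inf_comm]
    exact subPt_inf_apply (etaPt 𝒪 x) s.1 iB
  refine le_trans h1 ?_
  rw [supOf_apply hdir hsup iB]
  exact iSup_le fun d => le_iSup_of_le d (inf_le_inf_left _ (point_int_le hT d B))

end AuxStmt13


/-- In a locally super-compact space, ⇓[x] is directed with supremum [x] in pt_L𝒪(X). -/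
theorem stmt13 {X : Type*} (𝒪 : Set (X → L)) (hT : IsLTop 𝒪) (hl : IsLocallySC 𝒪) (x : X) :
    ∃ hx : IsPoint 𝒪 (etaPt 𝒪 x),
      IsDirectedL (fun p q : {p : 𝒪 → L // IsPoint 𝒪 p} => subPt 𝒪 p.1 q.1)
        (dwb (fun p q : {p : 𝒪 → L // IsPoint 𝒪 p} => subPt 𝒪 p.1 q.1) ⟨etaPt 𝒪 x, hx⟩) ∧
      IsSupOf (fun p q : {p : 𝒪 → L // IsPoint 𝒪 p} => subPt 𝒪 p.1 q.1)
        (dwb (fun p q : {p : 𝒪 → L // IsPoint 𝒪 p} => subPt 𝒪 p.1 q.1) ⟨etaPt 𝒪 x, hx⟩)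
        ⟨etaPt 𝒪 x, hx⟩ := by
  refine ⟨eta_isPoint x, ?_, ?_⟩
  · constructor
    · refine le_antisymm le_top ?_
      rw [← int_top hT hl x]
      exact iSup_le fun B => le_iSup_of_le (PB 𝒪 B) (int_le_dwb hT x B)
    · intro p q
      have hW_le : ∀ z : {p : 𝒪 → L // IsPoint 𝒪 p},
          dwb (fun p q : {p : 𝒪 → L // IsPoint 𝒪 p} => subPt 𝒪 p.1 q.1)
            ⟨etaPt 𝒪 x, eta_isPoint x⟩ z ≤
          ⨆ B : {B : X → L // IsSuperCompact 𝒪 B},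
            interiorF 𝒪 B.1 x ⊓ subPt 𝒪 z.1 (PB 𝒪 B).1 := by
        intro z
        refine le_trans (iInf_le _ ⟨⟨Dx 𝒪 x, ⟨etaPt 𝒪 x, eta_isPoint x⟩⟩,
          Dx_directed hT hl x, Dx_supOf hT hl x⟩) ?_
        show subPt 𝒪 (etaPt 𝒪 x) (etaPt 𝒪 x) ⇨
            (⨆ d, Dx 𝒪 x d ⊓ subPt 𝒪 z.1 d.1) ≤ _
        rw [subPt_refl', top_himp, Dx_iSup x (fun d => subPt 𝒪 z.1 d.1)]
      refine le_trans (inf_le_inf (hW_le p) (hW_le q)) ?_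
      rw [iSup_inf_eq]
      refine iSup_le fun B => ?_
      rw [inf_iSup_eq]
      refine iSup_le fun B' => ?_
      have heq : interiorF 𝒪 B.1 x ⊓ subPt 𝒪 p.1 (PB 𝒪 B).1 ⊓
          (interiorF 𝒪 B'.1 x ⊓ subPt 𝒪 q.1 (PB 𝒪 B').1) =
          (interiorF 𝒪 B.1 x ⊓ interiorF 𝒪 B'.1 x) ⊓
            (subPt 𝒪 p.1 (PB 𝒪 B).1 ⊓ subPt 𝒪 q.1 (PB 𝒪 B').1) := by ac_rfl
      rw [heq]
      refine le_trans (inf_le_inf_right _ (core hT hl x B B')) ?_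
      rw [iSup_inf_eq]
      refine iSup_le fun B'' => le_iSup_of_le (PB 𝒪 B'') ?_
      refine le_inf (le_inf ?_ ?_) ?_
      · exact le_trans inf_le_left (le_trans inf_le_left (int_le_dwb hT x B''))
      · refine le_trans (le_inf (le_trans inf_le_right inf_le_left)
          (le_trans (le_trans inf_le_left inf_le_right)
            (le_trans inf_le_left (subF_le_ePB B B'')))) ?_
        exact subPt_trans' _ _ _
      · refine le_trans (le_inf (le_trans inf_le_right inf_le_right)
          (le_trans (le_trans inf_le_left inf_le_right)
            (le_trans inf_le_right (subF_le_ePB B' B'')))) ?_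
        exact subPt_trans' _ _ _
  · intro q
    show subPt 𝒪 (etaPt 𝒪 x) q.1 = ⨅ z, dwb
      (fun p q : {p : 𝒪 → L // IsPoint 𝒪 p} => subPt 𝒪 p.1 q.1)
      ⟨etaPt 𝒪 x, eta_isPoint x⟩ z ⇨ subPt 𝒪 z.1 q.1
    apply le_antisymm
    · refine le_iInf fun z => le_himp_iff.mpr ?_
      have h1 : dwb (fun p q : {p : 𝒪 → L // IsPoint 𝒪 p} => subPt 𝒪 p.1 q.1)
          ⟨etaPt 𝒪 x, eta_isPoint x⟩ z ≤ subPt 𝒪 z.1 (etaPt 𝒪 x) :=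
        dwb_le_e_s13 _ (fun p => subPt_refl' p.1) (fun a b c => subPt_trans' a.1 b.1 c.1) _ z
      refine le_trans (inf_le_inf_left _ h1) ?_
      rw [inf_comm]
      exact subPt_trans' _ _ _
    · have h2 : (⨅ z, dwb (fun p q : {p : 𝒪 → L // IsPoint 𝒪 p} => subPt 𝒪 p.1 q.1)
          ⟨etaPt 𝒪 x, eta_isPoint x⟩ z ⇨ subPt 𝒪 z.1 q.1) ≤
          ⨅ B : {B : X → L // IsSuperCompact 𝒪 B},
            interiorF 𝒪 B.1 x ⇨ subPt 𝒪 (PB 𝒪 B).1 q.1 :=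
        le_iInf fun B => le_trans (iInf_le _ (PB 𝒪 B))
          (himp_le_himp_right (int_le_dwb hT x B))
      refine le_trans h2 ?_
      rw [← Dx_iInf x (fun z => subPt 𝒪 z.1 q.1)]
      exact (Dx_supOf hT hl x q).ge


end FuzzyPaper
end

section
/- Let P be an L-dcpo and x ∈ P. If there exists a directed L-subset D with D ≤ k(x) and ⊔D = x, then k(x) is directed and ⊔k(x) = x, where k(x)(y) = e(y,x) if y is compact and 0 otherwise. -/
open scoped Classical

namespace FuzzyPaper

variable {L : Type*} [Order.Frame L]

/-- If some directed D ≤ k(x) has supremum x, then k(x) is directed with supremum x. -/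
theorem stmt17 {P : Type*} (e : P → P → L) (he : IsLDcpo e) (x : P) (D : P → L)
    (hD : IsDirectedL e D) (hle : D ≤ kfun e x) (hsup : IsSupOf e D x) :
    IsDirectedL e (kfun e x) ∧ IsSupOf e (kfun e x) x := by
  obtain ⟨⟨hrefl, htrans, hanti⟩, _⟩ := he
  have key : ∀ y, dwb e y y = ⊤ → e y x ≤ ⨆ d, D d ⊓ e y d := by
    intro y hy
    have h := iInf_eq_top.mp hy ⟨(D, x), hD, hsup⟩
    exact himp_eq_top_iff.mp h
  constructor
  · constructor
    · refine top_le_iff.mp ?_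
      calc ⊤ = ⨆ z, D z := hD.1.symm
        _ ≤ ⨆ z, kfun e x z := iSup_mono hle
    · intro y₁ y₂
      unfold kfun
      split_ifs with h1 h2 h2
      · have k1 := key y₁ h1
        have k2 := key y₂ h2
        calc e y₁ x ⊓ e y₂ x
            ≤ (⨆ d, D d ⊓ e y₁ d) ⊓ (⨆ d', D d' ⊓ e y₂ d') := inf_le_inf k1 k2
          _ ≤ ⨆ z, kfun e x z ⊓ e y₁ z ⊓ e y₂ z := ?_
        rw [iSup_inf_eq]
        refine iSup_le fun d => ?_
        rw [inf_iSup_eq]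
        refine iSup_le fun d' => ?_
        have hdd : D d ⊓ D d' ≤ ⨆ z, D z ⊓ e d z ⊓ e d' z := hD.2 d d'
        calc (D d ⊓ e y₁ d) ⊓ (D d' ⊓ e y₂ d')
            = (D d ⊓ D d') ⊓ (e y₁ d ⊓ e y₂ d') := by
              rw [inf_inf_inf_comm]
          _ ≤ (⨆ z, D z ⊓ e d z ⊓ e d' z) ⊓ (e y₁ d ⊓ e y₂ d') :=
              inf_le_inf_right _ hdd
          _ ≤ ⨆ z, kfun e x z ⊓ e y₁ z ⊓ e y₂ z := ?_
        rw [iSup_inf_eq]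
        refine iSup_le fun z => le_iSup_of_le z ?_
        have pDz : (D z ⊓ e d z ⊓ e d' z) ⊓ (e y₁ d ⊓ e y₂ d') ≤ D z :=
          inf_le_left.trans (inf_le_left.trans inf_le_left)
        have p1 : (D z ⊓ e d z ⊓ e d' z) ⊓ (e y₁ d ⊓ e y₂ d') ≤ e y₁ z := by
          refine le_trans (le_inf ?_ ?_) (htrans y₁ d z)
          · exact inf_le_right.trans inf_le_left
          · exact inf_le_left.trans (inf_le_left.trans inf_le_right)
        have p2 : (D z ⊓ e d z ⊓ e d' z) ⊓ (e y₁ d ⊓ e y₂ d') ≤ e y₂ z := by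
          refine le_trans (le_inf ?_ ?_) (htrans y₂ d' z)
          · exact inf_le_right.trans inf_le_right
          · exact inf_le_left.trans inf_le_right
        exact le_inf (le_inf (pDz.trans (hle z)) p1) p2
      · simp
      · simp
      · simp
  · intro y
    have hz : ∀ z, kfun e x z ≤ e z x := by
      intro z; unfold kfun; split_ifs <;> simp
    apply le_antisymm
    · refine le_iInf fun z => le_himp_iff.mpr ?_
      calc e x y ⊓ kfun e x z ≤ e x y ⊓ e z x := inf_le_inf_left _ (hz z)
        _ = e z x ⊓ e x y := inf_comm _ _
        _ ≤ e z y := htrans z x y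
    · rw [hsup y]
      exact le_iInf fun z => iInf_le_of_le z (himp_le_himp_right (hle z))

end FuzzyPaper
end

section
/- Let P be an algebraic L-dcpo. Then {↑y : y ∈ K(P)} is a base of the Scott L-topology on P consisting of super-compact open sets; hence the Scott space Σ_L P is strong locally super-compact. -/
open scoped Classical

namespace FuzzyPaper

variable {L : Type*} [Order.Frame L]

private lemma subF_up {P : Type*} (e : P → P → L) (he : IsLOrder e)
    (A : P → L) (hA : ∀ x z, A x ⊓ e x z ≤ A z) (y : P) :
    subF (fun x => e y x) A = A y := by
  refine le_antisymm ((iInf_le _ y).trans ?_) (le_iInf fun x => le_himp_iff.mpr (hA y x))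
  simp only [he.1 y, top_himp, le_refl]

private lemma D_le_sup {P : Type*} (e : P → P → L) (he : IsLOrder e)
    (D : P → L) (s : P) (hs : IsSupOf e D s) : ∀ z, D z ≤ e z s := by
  intro z
  have h := hs s
  rw [he.1 s] at h
  have h2 : (⊤ : L) ≤ D z ⇨ e z s := h.le.trans (iInf_le _ z)
  simpa using le_himp_iff.mp h2

private lemma compact_way {P : Type*} (e : P → P → L) (y : P) (hy : dwb e y y = ⊤)
    (D : P → L) (s : P) (hD : IsDirectedL e D) (hs : IsSupOf e D s) :
    e y s ≤ ⨆ d, D d ⊓ e y d := by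
  have h : (⊤ : L) ≤ dwb e y y := hy.ge
  simp only [dwb] at h
  have h2 := h.trans (iInf_le _ (⟨(D, s), hD, hs⟩ :
    {Ds : (P → L) × P // IsDirectedL e Ds.1 ∧ IsSupOf e Ds.1 Ds.2}))
  simpa using le_himp_iff.mp h2

private lemma up_scottOpen {P : Type*} (e : P → P → L) (he : IsLOrder e)
    (y : P) (hy : dwb e y y = ⊤) : IsScottOpen e (fun x => e y x) := by
  constructor
  · exact fun x z => he.2.1 y x z
  · intro D s hD hs
    apply le_antisymm
    · exact (compact_way e y hy D s hD hs).trans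
        (iSup_mono fun d => (inf_comm _ _).le)
    · refine iSup_le fun x => ?_
      calc e y x ⊓ D x ≤ e y x ⊓ e x s := inf_le_inf_left _ (D_le_sup e he D s hs x)
        _ ≤ e y s := he.2.1 y x s

private lemma sSup_upper {P : Type*} (e : P → P → L) (S : Set (P → L))
    (hS : ∀ V ∈ S, ∀ x z, V x ⊓ e x z ≤ V z) :
    ∀ x z, sSup S x ⊓ e x z ≤ sSup S z := by
  intro x z
  rw [sSup_apply, sSup_apply, iSup_inf_eq]
  exact iSup_le fun V => le_iSup_of_le V (hS V V.2 x z)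

private lemma up_sc {P : Type*} (e : P → P → L) (he : IsLOrder e)
    (y : P) : IsSuperCompact (scottOpens e) (fun x => e y x) := by
  constructor
  · exact top_unique (le_iSup_of_le y (he.1 y).ge)
  · intro S hS
    have hup : ∀ V ∈ S, ∀ x z, V x ⊓ e x z ≤ V z := fun V hV => (hS hV).1
    rw [subF_up e he _ (sSup_upper e S hup) y, sSup_apply]
    apply le_antisymm
    · exact iSup_le fun V =>
        le_iSup₂_of_le V.1 V.2 (subF_up e he _ (hup V.1 V.2) y).ge
    · exact iSup₂_le fun V hV =>
        (subF_up e he V (hup V hV) y).le.trans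
          (le_iSup (fun f : S => (f : P → L) y) ⟨V, hV⟩)

/-- For an algebraic L-dcpo, {↑y : y compact} is a base of σ_L(P) consisting of
super-compact open sets; hence Σ_L P is strong locally super-compact. -/
theorem stmt18 {P : Type*} (e : P → P → L) (ha : IsAlgebraicLDcpo e) :
    IsBase (scottOpens e) {B | ∃ y : P, dwb e y y = ⊤ ∧ B = fun x => e y x} ∧
    (∀ B ∈ {B | ∃ y : P, dwb e y y = ⊤ ∧ B = fun x => e y x},
      IsSuperCompact (scottOpens e) B) ∧
    IsStrongLocallySC (scottOpens e) := by
  obtain ⟨⟨he, _⟩, halg⟩ := ha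
  have hsc : ∀ B ∈ {B | ∃ y : P, dwb e y y = ⊤ ∧ B = fun x => e y x},
      IsSuperCompact (scottOpens e) B := by
    rintro B ⟨y, hy, rfl⟩
    exact up_sc e he y
  have hbase : IsBase (scottOpens e) {B | ∃ y : P, dwb e y y = ⊤ ∧ B = fun x => e y x} := by
    constructor
    · rintro B ⟨y, hy, rfl⟩
      exact up_scottOpen e he y hy
    · intro A hA
      funext x
      apply le_antisymm
      · have h2 := hA.2 (kfun e x) x (halg x).1 (halg x).2
        rw [h2]
        refine iSup_le fun z => ?_
        by_cases hz : dwb e z z = ⊤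
        · refine le_trans ?_
            (le_iSup₂_of_le (fun w => e z w) ⟨z, hz, rfl⟩ le_rfl)
          rw [subF_up e he A hA.1 z]
          simp only [kfun, if_pos hz, le_refl]
        · simp [kfun, if_neg hz]
      · refine iSup₂_le ?_
        rintro B ⟨y, hy, rfl⟩
        rw [subF_up e he A hA.1 y]
        exact hA.1 y x
  exact ⟨hbase, hsc, _, hbase, hsc⟩

end FuzzyPaper
end

section
/- Let X be an L-topological space, p a point of 𝒪(X), and A a super-compact open set of X. Then sub_{𝒪(X)}([A], p) = p(A), where [A](B) = sub_X(A,B) for B ∈ 𝒪(X). -/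
open scoped Classical

namespace FuzzyPaper

variable {L : Type*} [Order.Frame L]

/-- For a super-compact open A and a point p, sub([A], p) = p(A). -/
theorem stmt19 {X : Type*} (𝒪 : Set (X → L)) (hT : IsLTop 𝒪)
    (p : 𝒪 → L) (hp : IsPoint 𝒪 p) (A : X → L) (hA : A ∈ 𝒪)
    (hsc : IsSuperCompact 𝒪 A) :
    subPt 𝒪 (fun B : 𝒪 => subF A (B : X → L)) p = p ⟨A, hA⟩ := by
  obtain ⟨hmeet, hjoin, hconst⟩ := hp
  apply le_antisymm
  · rw [subPt]
    refine le_trans (iInf_le _ ⟨A, hA⟩) ?_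
    have h : subF A A = ⊤ := by simp [subF]
    rw [h, top_himp]
  · rw [subPt]
    refine le_iInf fun B => ?_
    rw [le_himp_iff]
    set c := subF A (B : X → L) with hc
    have hcmem : (fun _ : X => c) ∈ 𝒪 := hT.2.2 c
    have hCmem : ((fun _ : X => c) ⊓ A) ∈ 𝒪 := hT.1 _ hcmem _ hA
    set C : 𝒪 := ⟨(fun _ : X => c) ⊓ A, hCmem⟩ with hC
    have hpC : p C = c ⊓ p ⟨A, hA⟩ := by
      have h1 := hmeet ⟨_, hcmem⟩ ⟨A, hA⟩ C rfl
      rw [h1, hconst c ⟨_, hcmem⟩ rfl]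
    have hle : (C : X → L) ≤ (B : X → L) := by
      intro x
      simp only [hC, Pi.inf_apply]
      calc c ⊓ A x ≤ (A x ⇨ (B : X → L) x) ⊓ A x :=
            inf_le_inf_right _ (iInf_le _ x)
        _ ≤ (B : X → L) x := by rw [inf_comm]; exact inf_himp_le
    have hsup : ((B : X → L)) = sSup (Subtype.val '' ({C, B} : Set 𝒪)) := by
      rw [Set.image_pair, sSup_pair, sup_eq_right.mpr hle]
    rw [hjoin {C, B} B hsup]
    calc p ⟨A, hA⟩ ⊓ c = p C := by rw [hpC, inf_comm]
      _ ≤ ⨆ D ∈ ({C, B} : Set 𝒪), p D := le_biSup _ (by simp)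

end FuzzyPaper
end
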